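/- arXiv:2209.11601 — 7 statements merged into one kernel-verified Lean document; each statement's English description precedes it below -/
import Mathlib

section
/- If a random variable X dominates Y in the likelihood ratio order (both with finite support), then X first-order stochastically dominates Y: for every real v, P(X ≥ v) ≥ P(Y ≥ v). -/
open scoped Classical BigOperators

/-- likelihood-ratio dominance implies first-order stochastic
dominance for finitely supported distributions. Here `μ` and `ν` are the
(finitely supported) mass functions of `X` and `Y`. -/
theorem lr_dominance_implies_fosd
    (μ ν : ℝ →₀ ℝ)
    (hμ0 : ∀ v, 0 ≤ μ v) (hμ1 : ∑ v ∈ μ.support, μ v = 1)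
    (hν0 : ∀ v, 0 ≤ ν v) (hν1 : ∑ v ∈ ν.support, ν v = 1)
    (hlr : ∀ v₁ v₂ : ℝ, v₁ ≤ v₂ → μ v₁ * ν v₂ ≤ μ v₂ * ν v₁) :
    ∀ v : ℝ,
      ∑ x ∈ ν.support.filter (fun x => v ≤ x), ν x
        ≤ ∑ x ∈ μ.support.filter (fun x => v ≤ x), μ x := by
  classical
  intro v
  set S : Finset ℝ := μ.support ∪ ν.support with hSdef
  set A : Finset ℝ := S.filter (fun x => v ≤ x) with hA
  set B : Finset ℝ := S.filter (fun x => ¬ v ≤ x) with hB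
  -- sums over support equal sums over S
  have hμext : ∀ T : Finset ℝ, μ.support ⊆ T →
      ∑ x ∈ T.filter (fun x => v ≤ x), μ x
        = ∑ x ∈ μ.support.filter (fun x => v ≤ x), μ x := by
    intro T hT
    refine (Finset.sum_subset (Finset.filter_subset_filter _ hT) ?_).symm
    intro x hx hx2
    by_contra h
    exact hx2 (Finset.mem_filter.mpr ⟨Finsupp.mem_support_iff.mpr (fun h0 => h (by simp [h0])),
      (Finset.mem_filter.mp hx).2⟩)
  have hνext : ∀ T : Finset ℝ, ν.support ⊆ T →
      ∑ x ∈ T.filter (fun x => v ≤ x), ν x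
        = ∑ x ∈ ν.support.filter (fun x => v ≤ x), ν x := by
    intro T hT
    refine (Finset.sum_subset (Finset.filter_subset_filter _ hT) ?_).symm
    intro x hx hx2
    by_contra h
    exact hx2 (Finset.mem_filter.mpr ⟨Finsupp.mem_support_iff.mpr (fun h0 => h (by simp [h0])),
      (Finset.mem_filter.mp hx).2⟩)
  have hμsub : μ.support ⊆ S := hSdef ▸ Finset.subset_union_left
  have hνsub : ν.support ⊆ S := hSdef ▸ Finset.subset_union_right
  have hμS : ∑ x ∈ S, μ x = 1 := by
    rw [← hμ1]
    exact (Finset.sum_subset hμsub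
      (fun x _ hx => Finsupp.notMem_support_iff.mp hx)).symm
  have hνS : ∑ x ∈ S, ν x = 1 := by
    rw [← hν1]
    exact (Finset.sum_subset hνsub
      (fun x _ hx => Finsupp.notMem_support_iff.mp hx)).symm
  have hsplitμ : ∑ x ∈ A, μ x + ∑ x ∈ B, μ x = 1 := by
    rw [hA, hB, Finset.sum_filter_add_sum_filter_not]; exact hμS
  have hsplitν : ∑ x ∈ A, ν x + ∑ x ∈ B, ν x = 1 := by
    rw [hA, hB, Finset.sum_filter_add_sum_filter_not]; exact hνS
  have key : (∑ x ∈ B, μ x) * (∑ y ∈ A, ν y)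
      ≤ (∑ y ∈ A, μ y) * (∑ x ∈ B, ν x) := by
    rw [Finset.sum_mul_sum, Finset.sum_mul_sum]
    rw [Finset.sum_comm (s := A) (t := B)]
    refine Finset.sum_le_sum (fun x hx => Finset.sum_le_sum (fun y hy => ?_))
    have hxv : ¬ v ≤ x := (Finset.mem_filter.mp hx).2
    have hyv : v ≤ y := (Finset.mem_filter.mp hy).2
    exact hlr x y (le_trans (le_of_not_ge hxv) hyv)
  have haμ : ∑ x ∈ A, μ x = ∑ x ∈ μ.support.filter (fun x => v ≤ x), μ x :=
    hμext S hμsub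
  have haν : ∑ x ∈ A, ν x = ∑ x ∈ ν.support.filter (fun x => v ≤ x), ν x :=
    hνext S hνsub
  have hAμ0 : 0 ≤ ∑ x ∈ A, μ x := Finset.sum_nonneg (fun x _ => hμ0 x)
  have hAν0 : 0 ≤ ∑ x ∈ A, ν x := Finset.sum_nonneg (fun x _ => hν0 x)
  have hBμ0 : 0 ≤ ∑ x ∈ B, μ x := Finset.sum_nonneg (fun x _ => hμ0 x)
  have hBν0 : 0 ≤ ∑ x ∈ B, ν x := Finset.sum_nonneg (fun x _ => hν0 x)
  rw [← haμ, ← haν]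
  nlinarith [key, hsplitμ, hsplitν]
end

section
/- If X ≥_lr Y (likelihood ratio order, finite supports) and A ⊆ ℝ is a set with P(X ∈ A) > 0 and P(Y ∈ A) > 0, then for every increasing function φ: ℝ → ℝ, E[φ(X) | X ∈ A] ≥ E[φ(Y) | Y ∈ A]. -/
open scoped Classical BigOperators

/-- likelihood-ratio dominance implies dominance of conditional
expectations of increasing functions, given membership in any set `A`. -/
theorem lr_dominance_conditional_expectation
    (μ ν : ℝ →₀ ℝ)
    (hμ0 : ∀ v, 0 ≤ μ v) (hμ1 : ∑ v ∈ μ.support, μ v = 1)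
    (hν0 : ∀ v, 0 ≤ ν v) (hν1 : ∑ v ∈ ν.support, ν v = 1)
    (hlr : ∀ v₁ v₂ : ℝ, v₁ ≤ v₂ → μ v₁ * ν v₂ ≤ μ v₂ * ν v₁)
    (A : Set ℝ)
    (hμA : 0 < ∑ x ∈ μ.support.filter (fun x => x ∈ A), μ x)
    (hνA : 0 < ∑ x ∈ ν.support.filter (fun x => x ∈ A), ν x)
    (φ : ℝ → ℝ) (hφ : Monotone φ) :
    (∑ x ∈ ν.support.filter (fun x => x ∈ A), ν x * φ x)
        / (∑ x ∈ ν.support.filter (fun x => x ∈ A), ν x)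
      ≤ (∑ x ∈ μ.support.filter (fun x => x ∈ A), μ x * φ x)
        / (∑ x ∈ μ.support.filter (fun x => x ∈ A), μ x) := by
  classical
  set F := (μ.support ∪ ν.support).filter (fun x => x ∈ A) with hF
  have hsubμ : μ.support.filter (fun x => x ∈ A) ⊆ F := by
    intro x hx
    simp only [hF, Finset.mem_filter, Finset.mem_union] at *
    exact ⟨Or.inl hx.1, hx.2⟩
  have hsubν : ν.support.filter (fun x => x ∈ A) ⊆ F := by
    intro x hx
    simp only [hF, Finset.mem_filter, Finset.mem_union] at *
    exact ⟨Or.inr hx.1, hx.2⟩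
  have hμzero : ∀ x ∈ F, x ∉ μ.support.filter (fun x => x ∈ A) → μ x = 0 := by
    intro x hx hx'
    simp only [hF, Finset.mem_filter, Finset.mem_union] at hx hx'
    by_contra h
    exact hx' ⟨Finsupp.mem_support_iff.mpr h, hx.2⟩
  have hνzero : ∀ x ∈ F, x ∉ ν.support.filter (fun x => x ∈ A) → ν x = 0 := by
    intro x hx hx'
    simp only [hF, Finset.mem_filter, Finset.mem_union] at hx hx'
    by_contra h
    exact hx' ⟨Finsupp.mem_support_iff.mpr h, hx.2⟩
  have e1 : ∑ x ∈ μ.support.filter (fun x => x ∈ A), μ x * φ x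
      = ∑ x ∈ F, μ x * φ x :=
    Finset.sum_subset hsubμ fun x hx hx' => by rw [hμzero x hx hx', zero_mul]
  have e2 : ∑ x ∈ μ.support.filter (fun x => x ∈ A), μ x = ∑ x ∈ F, μ x :=
    Finset.sum_subset hsubμ fun x hx hx' => hμzero x hx hx'
  have e3 : ∑ x ∈ ν.support.filter (fun x => x ∈ A), ν x * φ x
      = ∑ x ∈ F, ν x * φ x :=
    Finset.sum_subset hsubν fun x hx hx' => by rw [hνzero x hx hx', zero_mul]
  have e4 : ∑ x ∈ ν.support.filter (fun x => x ∈ A), ν x = ∑ x ∈ F, ν x :=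
    Finset.sum_subset hsubν fun x hx hx' => hνzero x hx hx'
  rw [e2] at hμA
  rw [e4] at hνA
  rw [e1, e2, e3, e4]
  rw [div_le_div_iff₀ hνA hμA]
  -- key symmetrized inequality
  have key : 0 ≤ ∑ x ∈ F, ∑ y ∈ F,
      (μ x * ν y * (φ x - φ y) + μ y * ν x * (φ y - φ x)) := by
    refine Finset.sum_nonneg fun x _ => Finset.sum_nonneg fun y _ => ?_
    rcases le_total x y with h | h
    · have h1 := hlr x y h
      have h2 := hφ h
      nlinarith
    · have h1 := hlr y x h
      have h2 := hφ h
      nlinarith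
  have hsplit : ∑ x ∈ F, ∑ y ∈ F,
      (μ x * ν y * (φ x - φ y) + μ y * ν x * (φ y - φ x))
      = (∑ x ∈ F, ∑ y ∈ F, μ x * ν y * (φ x - φ y))
        + (∑ x ∈ F, ∑ y ∈ F, μ y * ν x * (φ y - φ x)) := by
    rw [← Finset.sum_add_distrib]
    exact Finset.sum_congr rfl fun x _ => by rw [← Finset.sum_add_distrib]
  have hswap : (∑ x ∈ F, ∑ y ∈ F, μ y * ν x * (φ y - φ x))
      = ∑ x ∈ F, ∑ y ∈ F, μ x * ν y * (φ x - φ y) := Finset.sum_comm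
  have hS : 0 ≤ ∑ x ∈ F, ∑ y ∈ F, μ x * ν y * (φ x - φ y) := by
    rw [hsplit, hswap] at key; linarith
  have expand : (∑ x ∈ F, ∑ y ∈ F, μ x * ν y * (φ x - φ y))
      = (∑ x ∈ F, μ x * φ x) * (∑ y ∈ F, ν y)
        - (∑ x ∈ F, μ x) * (∑ y ∈ F, ν y * φ y) := by
    have hx : ∀ x, ∑ y ∈ F, μ x * ν y * (φ x - φ y)
        = μ x * φ x * (∑ y ∈ F, ν y) - μ x * (∑ y ∈ F, ν y * φ y) := by
      intro x
      rw [Finset.mul_sum, Finset.mul_sum, ← Finset.sum_sub_distrib]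
      exact Finset.sum_congr rfl fun y _ => by ring
    calc ∑ x ∈ F, ∑ y ∈ F, μ x * ν y * (φ x - φ y)
        = ∑ x ∈ F, (μ x * φ x * (∑ y ∈ F, ν y) - μ x * (∑ y ∈ F, ν y * φ y)) :=
          Finset.sum_congr rfl fun x _ => hx x
      _ = (∑ x ∈ F, μ x * φ x) * (∑ y ∈ F, ν y)
          - (∑ x ∈ F, μ x) * (∑ y ∈ F, ν y * φ y) := by
          rw [Finset.sum_sub_distrib, ← Finset.sum_mul, ← Finset.sum_mul]
  rw [expand] at hS
  linarith
end

section
/- If π̃ = a·π^Γ + (1−a)·π for some a ∈ [0,1] (a Γ-strengthening), then for every signaling structure (S, σ), the distribution of Q_Γ under P̃ dominates its distribution under P in the likelihood ratio order. -/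
open scoped Classical BigOperators

/-- if `π̃ = a·π^Γ + (1−a)·π` is a `Γ`-strengthening of `π`,
then for every signaling structure the distribution of `Q_Γ` under `P̃`
dominates its distribution under `P` in the likelihood ratio order. -/
theorem strengthening_implies_optimism
    {Θ S : Type*} [Fintype Θ] [Fintype S]
    (π πt : Θ → ℝ) (σ : Θ → S → ℝ) (Γ : Finset Θ)
    (hπ0 : ∀ θ, 0 ≤ π θ) (hπ1 : ∑ θ, π θ = 1)
    (hσ0 : ∀ θ s, 0 ≤ σ θ s) (hσ1 : ∀ θ, ∑ s, σ θ s = 1)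
    (p : ℝ) (hp : p = ∑ θ ∈ Γ, π θ) (hp0 : 0 < p) (hp1 : p < 1)
    (a : ℝ) (ha0 : 0 ≤ a) (ha1 : a ≤ 1)
    (hπt : ∀ θ, πt θ = a * (if θ ∈ Γ then π θ / p else 0) + (1 - a) * π θ)
    (P Pt Q : S → ℝ)
    (hP : ∀ s, P s = ∑ θ, π θ * σ θ s)
    (hPt : ∀ s, Pt s = ∑ θ, πt θ * σ θ s)
    (hQ : ∀ s, 0 < P s → Q s = (∑ θ ∈ Γ, π θ * σ θ s) / P s)
    (q₁ q₂ : ℝ) (hq : q₁ ≤ q₂) :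
    (∑ s ∈ Finset.univ.filter (fun s => 0 < P s ∧ Q s = q₁), Pt s)
        * (∑ s ∈ Finset.univ.filter (fun s => 0 < P s ∧ Q s = q₂), P s)
      ≤ (∑ s ∈ Finset.univ.filter (fun s => 0 < P s ∧ Q s = q₂), Pt s)
        * (∑ s ∈ Finset.univ.filter (fun s => 0 < P s ∧ Q s = q₁), P s) := by
  -- Key: for 0 < P s, Pt s = (a/p * Q s + (1-a)) * P s
  have key : ∀ s, 0 < P s → Pt s = (a / p * Q s + (1 - a)) * P s := by
    intro s hs
    have hPs : P s ≠ 0 := ne_of_gt hs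
    have hΓ : ∑ θ, (if θ ∈ Γ then π θ / p else 0) * σ θ s
        = (∑ θ ∈ Γ, π θ * σ θ s) / p := by
      simp only [ite_mul, zero_mul]
      rw [← Finset.sum_filter, Finset.filter_mem_eq_inter, Finset.univ_inter,
        Finset.sum_div]
      exact Finset.sum_congr rfl fun θ _ => by ring
    have hQs : (∑ θ ∈ Γ, π θ * σ θ s) = Q s * P s := by
      rw [hQ s hs, div_mul_cancel₀ _ hPs]
    rw [hPt]
    simp only [hπt, add_mul, Finset.sum_add_distrib, mul_assoc, ← Finset.mul_sum]
    rw [hΓ, hQs, ← hP]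
    field_simp
  set A := ∑ s ∈ Finset.univ.filter (fun s => 0 < P s ∧ Q s = q₁), P s with hA
  set B := ∑ s ∈ Finset.univ.filter (fun s => 0 < P s ∧ Q s = q₂), P s with hB
  have h1 : (∑ s ∈ Finset.univ.filter (fun s => 0 < P s ∧ Q s = q₁), Pt s)
      = (a / p * q₁ + (1 - a)) * A := by
    rw [hA, Finset.mul_sum]
    refine Finset.sum_congr rfl fun s hs => ?_
    simp only [Finset.mem_filter] at hs
    rw [key s hs.2.1, hs.2.2]
  have h2 : (∑ s ∈ Finset.univ.filter (fun s => 0 < P s ∧ Q s = q₂), Pt s)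
      = (a / p * q₂ + (1 - a)) * B := by
    rw [hB, Finset.mul_sum]
    refine Finset.sum_congr rfl fun s hs => ?_
    simp only [Finset.mem_filter] at hs
    rw [key s hs.2.1, hs.2.2]
  have hA0 : 0 ≤ A := Finset.sum_nonneg fun s hs =>
    (Finset.mem_filter.mp hs).2.1.le
  have hB0 : 0 ≤ B := Finset.sum_nonneg fun s hs =>
    (Finset.mem_filter.mp hs).2.1.le
  rw [h1, h2]
  have hc : a / p * q₁ + (1 - a) ≤ a / p * q₂ + (1 - a) := by
    have := div_nonneg ha0 hp0.le
    nlinarith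
  nlinarith [mul_nonneg hA0 hB0, mul_le_mul_of_nonneg_right hc (mul_nonneg hA0 hB0)]
end

section
/- Conversely, suppose π̃ is a prior on Θ (with π having full support) such that for EVERY signaling structure (S, σ) on Θ, (Q_Γ, P̃) ≥_lr (Q_Γ, P). Then π̃ = a·π^Γ + (1−a)·π for some a ∈ [0,1]. -/
open scoped Classical BigOperators

-- auxiliary limit lemma
lemma eps_limit (c d : ℝ) (h : ∀ ε : ℝ, 0 < ε → 0 ≤ c + ε * d) : 0 ≤ c := by
  by_contra hc
  push_neg at hc
  rcases le_or_gt d 0 with hd | hd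
  · have := h 1 one_pos; nlinarith
  · have hε : 0 < -c / (2 * d) := div_pos (by linarith) (by linarith)
    have h2 := h _ hε
    have h3 : -c / (2 * d) * d = -c / 2 := by field_simp
    rw [h3] at h2; linarith

-- the key linear inequality extracted from the optimism hypothesis
lemma key_ineq
    {Θ : Type*} [Fintype Θ]
    (π πt : Θ → ℝ) (Γ : Finset Θ)
    (hπ0 : ∀ θ, 0 < π θ) (hπ1 : ∑ θ, π θ = 1)
    (hπt1 : ∑ θ, πt θ = 1)
    (p : ℝ) (hp : p = ∑ θ ∈ Γ, π θ)
    (hopt : ∀ (S : Type) [Fintype S] (σ : Θ → S → ℝ),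
      (∀ θ s, 0 ≤ σ θ s) → (∀ θ, ∑ s, σ θ s = 1) →
      ∀ q₁ q₂ : ℝ, q₁ ≤ q₂ →
        (∑ s ∈ Finset.univ.filter (fun s =>
              0 < ∑ θ, π θ * σ θ s ∧
              (∑ θ ∈ Γ, π θ * σ θ s) / (∑ θ, π θ * σ θ s) = q₁),
            ∑ θ, πt θ * σ θ s)
          * (∑ s ∈ Finset.univ.filter (fun s =>
              0 < ∑ θ, π θ * σ θ s ∧
              (∑ θ ∈ Γ, π θ * σ θ s) / (∑ θ, π θ * σ θ s) = q₂),
            ∑ θ, π θ * σ θ s)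
        ≤ (∑ s ∈ Finset.univ.filter (fun s =>
              0 < ∑ θ, π θ * σ θ s ∧
              (∑ θ ∈ Γ, π θ * σ θ s) / (∑ θ, π θ * σ θ s) = q₂),
            ∑ θ, πt θ * σ θ s)
          * (∑ s ∈ Finset.univ.filter (fun s =>
              0 < ∑ θ, π θ * σ θ s ∧
              (∑ θ ∈ Γ, π θ * σ θ s) / (∑ θ, π θ * σ θ s) = q₁),
            ∑ θ, π θ * σ θ s))
    (w : Θ → ℝ) (hw0 : ∑ θ, w θ = 0) (hwΓ : 0 < ∑ θ ∈ Γ, w θ) :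
    0 ≤ ∑ θ, πt θ * (w θ / π θ) := by
  set x : Θ → ℝ := fun θ => w θ / π θ with hxdef
  have hπx : ∀ θ, π θ * x θ = w θ := by
    intro θ; simp only [hxdef]
    rw [mul_comm, div_mul_cancel₀ _ (hπ0 θ).ne']
  -- choose ε
  set M : ℝ := ∑ θ, |x θ| with hM
  have hM0 : 0 ≤ M := Finset.sum_nonneg fun θ _ => abs_nonneg _
  set ε : ℝ := 1 / (M + 1) with hεdef
  have hε : 0 < ε := by positivity
  have hεx : ∀ θ, |ε * x θ| ≤ 1 := by
    intro θ
    have h1 : |x θ| ≤ M := Finset.single_le_sum (fun θ _ => abs_nonneg (x θ)) (Finset.mem_univ θ)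
    rw [abs_mul, abs_of_pos hε]
    calc ε * |x θ| ≤ ε * (M + 1) := by
          apply mul_le_mul_of_nonneg_left (by linarith) hε.le
      _ = 1 := by rw [hεdef]; field_simp
  set σ : Θ → Bool → ℝ := fun θ b => if b then (1 + ε * x θ)/2 else (1 - ε * x θ)/2 with hσdef
  have hσ0 : ∀ θ b, 0 ≤ σ θ b := by
    intro θ b
    have := abs_le.mp (hεx θ)
    cases b <;> simp [hσdef] <;> linarith [this.1, this.2]
  have hσ1 : ∀ θ, ∑ b, σ θ b = 1 := by
    intro θ
    rw [Fintype.sum_bool]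
    simp [hσdef]; ring
  set c : ℝ := ∑ θ ∈ Γ, w θ with hc
  have hεc : 0 < ε * c := mul_pos hε hwΓ
  -- P computations
  have hPt : ∑ θ, π θ * σ θ true = 1/2 := by
    have : ∀ θ ∈ Finset.univ, π θ * σ θ true = π θ / 2 + (ε/2) * w θ := by
      intro θ _; rw [← hπx θ]; simp [hσdef]; ring
    rw [Finset.sum_congr rfl this, Finset.sum_add_distrib, ← Finset.sum_div,
      ← Finset.mul_sum, hπ1, hw0]
    ring
  have hPf : ∑ θ, π θ * σ θ false = 1/2 := by
    have : ∀ θ ∈ Finset.univ, π θ * σ θ false = π θ / 2 - (ε/2) * w θ := by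
      intro θ _; rw [← hπx θ]; simp [hσdef]; ring
    rw [Finset.sum_congr rfl this, Finset.sum_sub_distrib, ← Finset.sum_div,
      ← Finset.mul_sum, hπ1, hw0]
    ring
  have hΓt : ∑ θ ∈ Γ, π θ * σ θ true = p/2 + (ε/2) * c := by
    have : ∀ θ ∈ Γ, π θ * σ θ true = π θ / 2 + (ε/2) * w θ := by
      intro θ _; rw [← hπx θ]; simp [hσdef]; ring
    rw [Finset.sum_congr rfl this, Finset.sum_add_distrib, ← Finset.sum_div,
      ← Finset.mul_sum, ← hp, ← hc]
  have hΓf : ∑ θ ∈ Γ, π θ * σ θ false = p/2 - (ε/2) * c := by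
    have : ∀ θ ∈ Γ, π θ * σ θ false = π θ / 2 - (ε/2) * w θ := by
      intro θ _; rw [← hπx θ]; simp [hσdef]; ring
    rw [Finset.sum_congr rfl this, Finset.sum_sub_distrib, ← Finset.sum_div,
      ← Finset.mul_sum, ← hp, ← hc]
  have hqt : (∑ θ ∈ Γ, π θ * σ θ true) / (∑ θ, π θ * σ θ true) = p + ε * c := by
    rw [hΓt, hPt]; ring
  have hqf : (∑ θ ∈ Γ, π θ * σ θ false) / (∑ θ, π θ * σ θ false) = p - ε * c := by
    rw [hΓf, hPf]; ring
  have hq12 : p - ε * c ≤ p + ε * c := by linarith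
  have h := hopt Bool σ hσ0 hσ1 (p - ε * c) (p + ε * c) hq12
  have hF2 : (Finset.univ.filter (fun s =>
        0 < ∑ θ, π θ * σ θ s ∧
        (∑ θ ∈ Γ, π θ * σ θ s) / (∑ θ, π θ * σ θ s) = p + ε * c)) = {true} := by
    ext b
    cases b <;>
      simp [hPt, hPf, hqt, hqf] <;> intros <;> linarith
  have hF1 : (Finset.univ.filter (fun s =>
        0 < ∑ θ, π θ * σ θ s ∧
        (∑ θ ∈ Γ, π θ * σ θ s) / (∑ θ, π θ * σ θ s) = p - ε * c)) = {false} := by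
    ext b
    cases b <;>
      simp [hPt, hPf, hqt, hqf] <;> intros <;> linarith
  rw [hF1, hF2, Finset.sum_singleton, Finset.sum_singleton, Finset.sum_singleton,
    Finset.sum_singleton, hPt, hPf] at h
  -- compute P̃
  have hQt : ∑ θ, πt θ * σ θ true = 1/2 + (ε/2) * ∑ θ, πt θ * x θ := by
    have : ∀ θ ∈ Finset.univ, πt θ * σ θ true = πt θ / 2 + (ε/2) * (πt θ * x θ) := by
      intro θ _; simp [hσdef]; ring
    rw [Finset.sum_congr rfl this, Finset.sum_add_distrib, ← Finset.sum_div,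
      ← Finset.mul_sum, hπt1]
  have hQf : ∑ θ, πt θ * σ θ false = 1/2 - (ε/2) * ∑ θ, πt θ * x θ := by
    have : ∀ θ ∈ Finset.univ, πt θ * σ θ false = πt θ / 2 - (ε/2) * (πt θ * x θ) := by
      intro θ _; simp [hσdef]; ring
    rw [Finset.sum_congr rfl this, Finset.sum_sub_distrib, ← Finset.sum_div,
      ← Finset.mul_sum, hπt1]
  rw [hQt, hQf] at h
  have hT : 0 ≤ ∑ θ, πt θ * x θ := by nlinarith
  calc (0:ℝ) ≤ ∑ θ, πt θ * x θ := hT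
    _ = ∑ θ, πt θ * (w θ / π θ) := rfl

/-- if for every signaling structure the distribution of
Alice's posterior `Q_Γ` under Carroll's measure `P̃` likelihood-ratio
dominates its distribution under `P`, then Carroll's prior `π̃` is a
`Γ`-strengthening of `π`. -/
theorem optimism_implies_strengthening
    {Θ : Type*} [Fintype Θ]
    (π πt : Θ → ℝ) (Γ : Finset Θ)
    (hπ0 : ∀ θ, 0 < π θ) (hπ1 : ∑ θ, π θ = 1)
    (hπt0 : ∀ θ, 0 ≤ πt θ) (hπt1 : ∑ θ, πt θ = 1)
    (p : ℝ) (hp : p = ∑ θ ∈ Γ, π θ) (hp0 : 0 < p) (hp1 : p < 1)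
    (hopt : ∀ (S : Type) [Fintype S] (σ : Θ → S → ℝ),
      (∀ θ s, 0 ≤ σ θ s) → (∀ θ, ∑ s, σ θ s = 1) →
      ∀ q₁ q₂ : ℝ, q₁ ≤ q₂ →
        (∑ s ∈ Finset.univ.filter (fun s =>
              0 < ∑ θ, π θ * σ θ s ∧
              (∑ θ ∈ Γ, π θ * σ θ s) / (∑ θ, π θ * σ θ s) = q₁),
            ∑ θ, πt θ * σ θ s)
          * (∑ s ∈ Finset.univ.filter (fun s =>
              0 < ∑ θ, π θ * σ θ s ∧
              (∑ θ ∈ Γ, π θ * σ θ s) / (∑ θ, π θ * σ θ s) = q₂),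
            ∑ θ, π θ * σ θ s)
        ≤ (∑ s ∈ Finset.univ.filter (fun s =>
              0 < ∑ θ, π θ * σ θ s ∧
              (∑ θ ∈ Γ, π θ * σ θ s) / (∑ θ, π θ * σ θ s) = q₂),
            ∑ θ, πt θ * σ θ s)
          * (∑ s ∈ Finset.univ.filter (fun s =>
              0 < ∑ θ, π θ * σ θ s ∧
              (∑ θ ∈ Γ, π θ * σ θ s) / (∑ θ, π θ * σ θ s) = q₁),
            ∑ θ, π θ * σ θ s)) :
    ∃ a : ℝ, 0 ≤ a ∧ a ≤ 1 ∧
      ∀ θ, πt θ = a * (if θ ∈ Γ then π θ / p else 0) + (1 - a) * π θ := by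
  have key := key_ineq π πt Γ hπ0 hπ1 hπt1 p hp hopt
  -- the three-point version
  have key3 : ∀ (θ1 θ2 θ3 : Θ) (c1 c2 c3 : ℝ),
      c1 + c2 + c3 = 0 →
      0 < (if θ1 ∈ Γ then c1 else 0) + (if θ2 ∈ Γ then c2 else 0)
            + (if θ3 ∈ Γ then c3 else 0) →
      0 ≤ πt θ1 * (c1 / π θ1) + πt θ2 * (c2 / π θ2) + πt θ3 * (c3 / π θ3) := by
    intro θ1 θ2 θ3 c1 c2 c3 h0 hΓ
    set w : Θ → ℝ := fun θ =>
      (if θ = θ1 then c1 else 0) + (if θ = θ2 then c2 else 0)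
        + (if θ = θ3 then c3 else 0) with hwdef
    have hw0 : ∑ θ, w θ = 0 := by
      simp only [hwdef, Finset.sum_add_distrib, Finset.sum_ite_eq', Finset.mem_univ,
        if_true]
      exact h0
    have hwΓ : 0 < ∑ θ ∈ Γ, w θ := by
      simp only [hwdef, Finset.sum_add_distrib, Finset.sum_ite_eq']
      exact hΓ
    have hsum := key w hw0 hwΓ
    have hval : ∑ θ, πt θ * (w θ / π θ)
        = πt θ1 * (c1 / π θ1) + πt θ2 * (c2 / π θ2) + πt θ3 * (c3 / π θ3) := by
      have hterm : ∀ θ ∈ Finset.univ, πt θ * (w θ / π θ)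
          = (if θ = θ1 then πt θ1 * (c1 / π θ1) else 0)
            + (if θ = θ2 then πt θ2 * (c2 / π θ2) else 0)
            + (if θ = θ3 then πt θ3 * (c3 / π θ3) else 0) := by
        intro θ _
        simp only [hwdef]
        split_ifs with h1 h2 h3 <;> subst_vars <;> ring
      rw [Finset.sum_congr rfl hterm]
      simp [Finset.sum_add_distrib, Finset.sum_ite_eq']
    rw [hval] at hsum
    exact hsum
  -- ratio function
  set r : Θ → ℝ := fun θ => πt θ / π θ with hrdef
  have hrpt : ∀ θ, πt θ = r θ * π θ := by
    intro θ; simp only [hrdef]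
    rw [div_mul_cancel₀ _ (hπ0 θ).ne']
  have hr0 : ∀ θ, 0 ≤ r θ := fun θ => div_nonneg (hπt0 θ) (hπ0 θ).le
  have hkey3' : ∀ (θ1 θ2 θ3 : Θ) (c1 c2 c3 : ℝ),
      c1 + c2 + c3 = 0 →
      0 < (if θ1 ∈ Γ then c1 else 0) + (if θ2 ∈ Γ then c2 else 0)
            + (if θ3 ∈ Γ then c3 else 0) →
      0 ≤ c1 * r θ1 + c2 * r θ2 + c3 * r θ3 := by
    intro θ1 θ2 θ3 c1 c2 c3 h0 hΓ
    have := key3 θ1 θ2 θ3 c1 c2 c3 h0 hΓ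
    have e : ∀ θ (c : ℝ), πt θ * (c / π θ) = c * r θ := by
      intro θ c; rw [hrdef]; ring
    rw [e, e, e] at this
    exact this
  -- Γ and its complement are nonempty
  obtain ⟨θg, hθg⟩ : Γ.Nonempty := by
    rw [Finset.nonempty_iff_ne_empty]
    intro h
    rw [h] at hp
    simp at hp
    linarith
  obtain ⟨θn, hθn⟩ : ∃ θ, θ ∉ Γ := by
    by_contra h
    push_neg at h
    have : Γ = Finset.univ := Finset.eq_univ_of_forall h
    rw [this, hπ1] at hp
    linarith
  -- cross inequality: r θ2 ≤ r θ1 for θ1 ∈ Γ, θ2 ∉ Γ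
  have cross : ∀ θ1 θ2, θ1 ∈ Γ → θ2 ∉ Γ → r θ2 ≤ r θ1 := by
    intro θ1 θ2 h1 h2
    have := hkey3' θ1 θ2 θ2 1 (-1) 0 (by ring) (by simp [h1, h2])
    linarith
  -- constancy on the complement
  have constN : ∀ θ1 θ2, θ1 ∉ Γ → θ2 ∉ Γ → r θ2 ≤ r θ1 := by
    intro θ1 θ2 h1 h2
    have h : 0 ≤ r θ1 - r θ2 := by
      apply eps_limit _ (r θg - r θ2)
      intro ε hε
      have := hkey3' θ1 θ2 θg 1 (-1 - ε) ε (by ring)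
        (by simp only [if_neg h1, if_neg h2, if_pos hθg]; linarith)
      linarith
    linarith
  have constN' : ∀ θ, θ ∉ Γ → r θ = r θn := fun θ h =>
    le_antisymm (constN θn θ hθn h) (constN θ θn h hθn)
  -- constancy on Γ
  have constG : ∀ θ1 θ2, θ1 ∈ Γ → θ2 ∈ Γ → r θ2 ≤ r θ1 := by
    intro θ1 θ2 h1 h2
    have h : 0 ≤ r θ1 - r θ2 := by
      apply eps_limit _ (r θ2 - r θn)
      intro ε hε
      have := hkey3' θ1 θ2 θn 1 (ε - 1) (-ε) (by ring)
        (by simp only [if_pos h1, if_pos h2, if_neg hθn]; linarith)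
      linarith
    linarith
  have constG' : ∀ θ, θ ∈ Γ → r θ = r θg := fun θ h =>
    le_antisymm (constG θg θ hθg h) (constG θ θg h hθg)
  -- total mass equation
  have hpc : ∑ θ ∈ Γᶜ, π θ = 1 - p := by
    have := Finset.sum_add_sum_compl Γ π
    rw [hπ1, ← hp] at this
    linarith
  have hmass : r θg * p + r θn * (1 - p) = 1 := by
    have h1 : ∑ θ ∈ Γ, πt θ = r θg * p := by
      rw [hp, Finset.mul_sum]
      apply Finset.sum_congr rfl
      intro θ hθ
      rw [hrpt θ, constG' θ hθ]
    have h2 : ∑ θ ∈ Γᶜ, πt θ = r θn * (1 - p) := by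
      rw [← hpc, Finset.mul_sum]
      apply Finset.sum_congr rfl
      intro θ hθ
      rw [hrpt θ, constN' θ (Finset.mem_compl.mp hθ)]
    have := Finset.sum_add_sum_compl Γ πt
    rw [hπt1, h1, h2] at this
    linarith
  -- define a
  refine ⟨1 - r θn, ?_, ?_, ?_⟩
  · -- 0 ≤ a : from r θn ≤ r θg and mass equation
    have hle := cross θg θn hθg hθn
    nlinarith [hr0 θn]
  · linarith [hr0 θn]
  · intro θ
    by_cases hθ : θ ∈ Γ
    · rw [if_pos hθ, hrpt θ, constG' θ hθ]
      have hgp : r θg * p = 1 - r θn * (1 - p) := by linarith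
      field_simp
      linear_combination π θ * hgp
    · rw [if_neg hθ, hrpt θ, constN' θ hθ]
      ring
end

section
/- Let Θ be a finite subset of ℝ with full-support priors π, π̃, and suppose that for all vectors x ∈ ℝ^Θ: (π·x = 0 and π^Γ·x > 0) implies π̃·x ≥ 0, where π^Γ is π conditioned on Γ ⊆ Θ, π(Γ) ∈ (0,1). Then π̃ = a·π^Γ + b·π with a, b ≥ 0 and a + b = 1. -/
open scoped Classical BigOperators

set_option linter.unnecessarySeqFocus false

/-- Farkas step: if every vector `x` with `π·x = 0` and
`π^Γ·x > 0` satisfies `π̃·x ≥ 0`, then `π̃ = a·π^Γ + b·π` with `a, b ≥ 0`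
and `a + b = 1`. -/
theorem farkas_strengthening
    {Θ : Type*} [Fintype Θ]
    (π πt : Θ → ℝ) (Γ : Finset Θ)
    (hπ0 : ∀ θ, 0 < π θ) (hπ1 : ∑ θ, π θ = 1)
    (hπt0 : ∀ θ, 0 ≤ πt θ) (hπt1 : ∑ θ, πt θ = 1)
    (p : ℝ) (hp : p = ∑ θ ∈ Γ, π θ) (hp0 : 0 < p) (hp1 : p < 1)
    (hx : ∀ x : Θ → ℝ,
      (∑ θ, π θ * x θ = 0) → (0 < ∑ θ ∈ Γ, π θ * x θ) →
      0 ≤ ∑ θ, πt θ * x θ) :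
    ∃ a b : ℝ, 0 ≤ a ∧ 0 ≤ b ∧ a + b = 1 ∧
      ∀ θ, πt θ = a * (if θ ∈ Γ then π θ / p else 0) + b * π θ := by
  classical
  set y : Θ → ℝ := fun θ => (if θ ∈ Γ then 1 / p else 0) - 1 with hy
  have hsumIf : ∀ f : Θ → ℝ,
      (∑ θ, (if θ ∈ Γ then f θ else 0)) = ∑ θ ∈ Γ, f θ := by
    intro f
    rw [Finset.sum_ite_mem, Finset.univ_inter]
  have hπy : ∑ θ, π θ * y θ = 0 := by
    have h0 : ∀ θ, π θ * y θ = (if θ ∈ Γ then π θ * (1 / p) else 0) - π θ := by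
      intro θ
      by_cases h : θ ∈ Γ
      · simp only [hy, if_pos h]; ring
      · simp only [hy, if_neg h]; ring
    simp only [h0, Finset.sum_sub_distrib, hsumIf, hπ1, ← Finset.sum_mul, ← hp]
    field_simp
    ring
  have hπΓy : ∑ θ ∈ Γ, π θ * y θ = 1 - p := by
    have h0 : ∀ θ ∈ Γ, π θ * y θ = π θ * (1 / p) - π θ := by
      intro θ h; simp only [hy, if_pos h]; ring
    rw [Finset.sum_congr rfl h0, Finset.sum_sub_distrib, ← Finset.sum_mul, ← hp,
      mul_one_div, div_self hp0.ne']
  have hπty : ∑ θ, πt θ * y θ = (∑ θ ∈ Γ, πt θ) / p - 1 := by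
    have h0 : ∀ θ, πt θ * y θ = (if θ ∈ Γ then πt θ * (1 / p) else 0) - πt θ := by
      intro θ
      by_cases h : θ ∈ Γ
      · simp only [hy, if_pos h]; ring
      · simp only [hy, if_neg h]; ring
    simp only [h0, Finset.sum_sub_distrib, hsumIf, hπt1, ← Finset.sum_mul]
    ring
  -- key: vectors orthogonal to π and to π restricted to Γ are orthogonal to πt
  have key : ∀ x : Θ → ℝ, (∑ θ, π θ * x θ = 0) → (∑ θ ∈ Γ, π θ * x θ = 0) →
      ∑ θ, πt θ * x θ = 0 := by
    intro x h1 h2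
    set s := ∑ θ, πt θ * x θ with hs
    set C := ∑ θ, πt θ * y θ with hC
    have main : ∀ ε : ℝ, 0 < ε → ∀ σ : ℝ, σ = 1 ∨ σ = -1 →
        0 ≤ σ * s + ε * C := by
      intro ε hε σ hσ
      have hxs : ∀ f : Θ → ℝ, (∑ θ, f θ * (fun t => σ * x t + ε * y t) θ)
          = σ * (∑ θ, f θ * x θ) + ε * (∑ θ, f θ * y θ) := by
        intro f
        simp only [Finset.mul_sum, ← Finset.sum_add_distrib]
        apply Finset.sum_congr rfl; intro θ _; ring
      have hxsΓ : ∀ f : Θ → ℝ, (∑ θ ∈ Γ, f θ * (fun t => σ * x t + ε * y t) θ)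
          = σ * (∑ θ ∈ Γ, f θ * x θ) + ε * (∑ θ ∈ Γ, f θ * y θ) := by
        intro f
        simp only [Finset.mul_sum, ← Finset.sum_add_distrib]
        apply Finset.sum_congr rfl; intro θ _; ring
      have := hx (fun t => σ * x t + ε * y t) (by rw [hxs, h1, hπy]; ring)
        (by rw [hxsΓ, h2, hπΓy]; nlinarith)
      rw [hxs] at this
      linarith [this]
    have hpos : ∀ ε : ℝ, 0 < ε → 0 ≤ s + ε * C := by
      intro ε hε; have := main ε hε 1 (Or.inl rfl); linarith
    have hneg : ∀ ε : ℝ, 0 < ε → 0 ≤ -s + ε * C := by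
      intro ε hε; have := main ε hε (-1) (Or.inr rfl); linarith
    have hC0 : 0 ≤ C := by
      rcases le_or_gt 0 C with h | h
      · exact h
      · have h1 := hpos 1 one_pos
        have h2 := hneg 1 one_pos
        linarith
    by_contra hne
    rcases lt_or_gt_of_ne hne with h | h
    · -- s < 0
      have hCpos : 0 < C := by
        by_contra hc
        have hc0 : C = 0 := le_antisymm (not_lt.mp hc) hC0
        have := hpos 1 one_pos
        linarith
      have := hpos (-s / (2 * C)) (div_pos (by linarith) (by linarith))
      have hC' : (-s / (2 * C)) * C = -s / 2 := by
        field_simp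
      rw [hC'] at this; linarith
    · have hCpos : 0 < C := by
        by_contra hc
        have hc0 : C = 0 := le_antisymm (not_lt.mp hc) hC0
        have := hneg 1 one_pos
        linarith
      have := hneg (s / (2 * C)) (div_pos (by linarith) (by linarith))
      have hC' : (s / (2 * C)) * C = s / 2 := by
        field_simp
      rw [hC'] at this; linarith
  -- pick θ₀ ∉ Γ, θ₁ ∈ Γ
  have hΓne : Γ.Nonempty := by
    by_contra h
    rw [Finset.not_nonempty_iff_eq_empty] at h
    rw [h, Finset.sum_empty] at hp; linarith
  have hΓc : ∃ θ, θ ∉ Γ := by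
    by_contra h
    push_neg at h
    have : Γ = Finset.univ := Finset.eq_univ_iff_forall.mpr h
    rw [this, hπ1] at hp; linarith
  obtain ⟨θ₀, hθ₀⟩ := hΓc
  obtain ⟨θ₁, hθ₁⟩ := hΓne
  set b := πt θ₀ / π θ₀ with hb
  set r := πt θ₁ / π θ₁ with hr
  -- ratio lemma
  have ratio : ∀ u v : Θ, (u ∈ Γ ↔ v ∈ Γ) → πt u / π u = πt v / π v := by
    intro u v huv
    by_cases heq : u = v
    · rw [heq]
    · have hvu : ¬ v = u := fun h => heq h.symm
      set x : Θ → ℝ := fun t => (if t = u then 1 / π u else 0) -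
        (if t = v then 1 / π v else 0) with hxdef
      have hsum : ∀ f : Θ → ℝ, ∑ θ, f θ * x θ = f u / π u - f v / π v := by
        intro f
        have h0 : ∀ θ, f θ * x θ = (if θ = u then f θ * (1 / π u) else 0) -
            (if θ = v then f θ * (1 / π v) else 0) := by
          intro θ
          by_cases h1 : θ = u <;> by_cases h2 : θ = v <;>
            simp [hxdef, h1, h2, heq, hvu] <;> ring
        simp only [h0, Finset.sum_sub_distrib, Finset.sum_ite_eq',
          Finset.mem_univ, if_true]
        ring
      have hsumΓ : ∑ θ ∈ Γ, π θ * x θ = 0 := by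
        by_cases hu : u ∈ Γ
        · have hv : v ∈ Γ := huv.mp hu
          have h0 : ∀ θ ∈ Γ, π θ * x θ = (if θ = u then π θ * (1 / π u) else 0) -
              (if θ = v then π θ * (1 / π v) else 0) := by
            intro θ _
            by_cases h1 : θ = u <;> by_cases h2 : θ = v <;>
              simp [hxdef, h1, h2, heq, hvu] <;> ring
          rw [Finset.sum_congr rfl h0, Finset.sum_sub_distrib,
            Finset.sum_ite_eq' Γ u, Finset.sum_ite_eq' Γ v, if_pos hu, if_pos hv]
          have h1 := (hπ0 u).ne'
          have h2 := (hπ0 v).ne'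
          field_simp
          ring
        · have hv : v ∉ Γ := fun h => hu (huv.mpr h)
          apply Finset.sum_eq_zero
          intro θ hθ
          have h1 : θ ≠ u := fun h => hu (h ▸ hθ)
          have h2 : θ ≠ v := fun h => hv (h ▸ hθ)
          simp [hxdef, h1, h2]
      have h1 : ∑ θ, π θ * x θ = 0 := by
        rw [hsum]
        have h1 := (hπ0 u).ne'
        have h2 := (hπ0 v).ne'
        field_simp
        ring
      have := key x h1 hsumΓ
      rw [hsum] at this
      linarith
  have hoff : ∀ θ, θ ∉ Γ → πt θ = b * π θ := by
    intro θ hθ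
    have h0 := ratio θ θ₀ (by simp [hθ, hθ₀])
    rw [hb, ← h0, div_mul_cancel₀ _ (hπ0 θ).ne']
  have hon : ∀ θ, θ ∈ Γ → πt θ = r * π θ := by
    intro θ hθ
    have h0 := ratio θ θ₁ (by simp [hθ, hθ₁])
    rw [hr, ← h0, div_mul_cancel₀ _ (hπ0 θ).ne']
  -- sum relations
  have hsumΓπt : ∑ θ ∈ Γ, πt θ = r * p := by
    rw [Finset.sum_congr rfl hon, ← Finset.mul_sum, ← hp]
  have hsumΓcπt : ∑ θ ∈ Γᶜ, πt θ = b * (1 - p) := by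
    have h1 : ∑ θ ∈ Γᶜ, πt θ = b * ∑ θ ∈ Γᶜ, π θ := by
      rw [Finset.mul_sum]
      apply Finset.sum_congr rfl
      intro θ hθ
      exact hoff θ (Finset.mem_compl.mp hθ)
    have h2 : ∑ θ ∈ Γᶜ, π θ = 1 - p := by
      have := Finset.sum_add_sum_compl Γ π
      rw [hπ1, ← hp] at this; linarith
    rw [h1, h2]
  have htotal : r * p + b * (1 - p) = 1 := by
    have := Finset.sum_add_sum_compl Γ πt
    rw [hπt1, hsumΓπt, hsumΓcπt] at this
    linarith
  -- r ≥ 1 from hx applied to y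
  have hr1 : 1 ≤ r := by
    have h0 := hx y hπy (by rw [hπΓy]; linarith)
    rw [hπty, hsumΓπt] at h0
    rw [mul_div_assoc, div_self hp0.ne'] at h0
    linarith
  have hb0 : 0 ≤ b := div_nonneg (hπt0 θ₀) (hπ0 θ₀).le
  have hb1 : b ≤ 1 := by nlinarith
  refine ⟨1 - b, b, by linarith, hb0, by ring, ?_⟩
  intro θ
  by_cases hθ : θ ∈ Γ
  · rw [if_pos hθ, hon θ hθ]
    have hrv : r = (1 - b) / p + b := by
      field_simp
      nlinarith
    rw [hrv]
    field_simp
  · rw [if_neg hθ, hoff θ hθ]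
    ring
end

section
/- If distinct upper-set structure is not assumed: suppose π̃ ≠ π and there exist two sets Γ₁, Γ₂ ⊆ Θ with π(Γ₁), π(Γ₂) ∈ (0,1) such that π̃ is simultaneously a Γ₁-strengthening and a Γ₂-strengthening of π with both coefficients positive. Then Γ₁ and Γ₂ induce the same conditional: π^{Γ₁} = π^{Γ₂}. In particular, if π^{Γ₁} ≠ π^{Γ₂}, being both Γ₁- and Γ₂-optimistic forces π̃ = π. -/
open scoped Classical BigOperators

/-- if `π̃ ≠ π` is simultaneously a `Γ₁`-strengthening and a
`Γ₂`-strengthening of `π` with both coefficients positive, then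
`π^{Γ₁} = π^{Γ₂}`. -/
theorem two_strengthenings_same_conditional
    {Θ : Type*} [Fintype Θ]
    (π πt : Θ → ℝ) (Γ₁ Γ₂ : Finset Θ)
    (hπ0 : ∀ θ, 0 < π θ) (hπ1 : ∑ θ, π θ = 1)
    (p₁ p₂ : ℝ) (hp₁ : p₁ = ∑ θ ∈ Γ₁, π θ) (hp₂ : p₂ = ∑ θ ∈ Γ₂, π θ)
    (hp₁0 : 0 < p₁) (hp₁1 : p₁ < 1) (hp₂0 : 0 < p₂) (hp₂1 : p₂ < 1)
    (hne : πt ≠ π)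
    (a₁ a₂ : ℝ) (ha₁0 : 0 < a₁) (ha₁1 : a₁ ≤ 1) (ha₂0 : 0 < a₂) (ha₂1 : a₂ ≤ 1)
    (h₁ : ∀ θ, πt θ = a₁ * (if θ ∈ Γ₁ then π θ / p₁ else 0) + (1 - a₁) * π θ)
    (h₂ : ∀ θ, πt θ = a₂ * (if θ ∈ Γ₂ then π θ / p₂ else 0) + (1 - a₂) * π θ) :
    ∀ θ, (if θ ∈ Γ₁ then π θ / p₁ else 0) = (if θ ∈ Γ₂ then π θ / p₂ else 0) := by
  have key : ∀ θ, θ ∈ Γ₁ ↔ θ ∈ Γ₂ := by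
    intro θ
    have e := (h₁ θ).symm.trans (h₂ θ)
    have hπθ := hπ0 θ
    constructor
    · intro hm1
      by_contra hm2
      simp only [if_pos hm1, if_neg hm2, mul_zero, zero_add] at e
      have hgt : π θ < π θ / p₁ := by
        rw [lt_div_iff₀ hp₁0]; nlinarith
      nlinarith
    · intro hm2
      by_contra hm1
      simp only [if_pos hm2, if_neg hm1, mul_zero, zero_add] at e
      have hgt : π θ < π θ / p₂ := by
        rw [lt_div_iff₀ hp₂0]; nlinarith
      nlinarith
  have hΓ : Γ₁ = Γ₂ := Finset.ext key
  have hp : p₁ = p₂ := by rw [hp₁, hp₂, hΓ]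
  intro θ
  rw [hΓ, hp]
end

section
/- Let Θ be a finite subset of ℝ with full-support priors π, π̃. Then π̃ ≥_lr π (i.e., π̃(θ)/π(θ) increasing in θ) if and only if π̃ can be obtained from π by a finite sequence of upper-set strengthenings: there exist upper sets Γ₁,...,Γ_k and coefficients a₁,...,a_k ∈ [0,1] such that setting π₀ = π and π_i = a_i·π_{i−1}^{Γ_i} + (1−a_i)·π_{i−1}, we have π_k = π̃. -/
open scoped Classical BigOperators

set_option maxHeartbeats 1000000 in
/-- `π̃ ≥_lr π` iff `π̃` is obtained from `π` by a finite
sequence of upper-set strengthenings. -/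
theorem lr_iff_monotonic_strengthening
    {Θ : Type*} [Fintype Θ] [LinearOrder Θ]
    (π πt : Θ → ℝ)
    (hπ0 : ∀ θ, 0 < π θ) (hπ1 : ∑ θ, π θ = 1)
    (hπt0 : ∀ θ, 0 < πt θ) (hπt1 : ∑ θ, πt θ = 1) :
    (∀ θ θ' : Θ, θ ≤ θ' → πt θ * π θ' ≤ πt θ' * π θ)
      ↔ ∃ (k : ℕ) (Γ : Fin k → Finset Θ) (a : Fin k → ℝ)
          (seq : Fin (k + 1) → Θ → ℝ),
          (∀ i, ∀ θ ∈ Γ i, ∀ θ' : Θ, θ ≤ θ' → θ' ∈ Γ i) ∧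
          (∀ i, 0 ≤ a i ∧ a i ≤ 1) ∧
          seq 0 = π ∧ seq (Fin.last k) = πt ∧
          ∀ i : Fin k,
            0 < (∑ θ ∈ Γ i, seq i.castSucc θ) ∧
            ∀ θ, seq i.succ θ =
              a i * (if θ ∈ Γ i then
                  seq i.castSucc θ / (∑ θ' ∈ Γ i, seq i.castSucc θ') else 0)
                + (1 - a i) * seq i.castSucc θ := by
  constructor
  · -- forward direction
    intro h
    have hne : Nonempty Θ := by
      by_contra hc
      rw [not_nonempty_iff] at hc
      rw [Finset.univ_eq_empty, Finset.sum_empty] at hπ1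
      exact one_ne_zero hπ1.symm
    set n := Fintype.card Θ with hn
    have hn0 : 0 < n := Fintype.card_pos
    set k := n - 1 with hk
    have hkn : k + 1 = n := Nat.succ_pred_eq_of_pos hn0
    obtain ⟨e⟩ : Nonempty (Fin n ≃o Θ) := ⟨monoEquivOfFin Θ rfl⟩
    set ι : Fin (k + 1) → Fin n := Fin.cast hkn with hι
    set r : Θ → ℝ := fun θ => πt θ / π θ with hrdef
    have hr0 : ∀ θ, 0 < r θ := fun θ => div_pos (hπt0 θ) (hπ0 θ)
    have hrmono : ∀ θ θ' : Θ, θ ≤ θ' → r θ ≤ r θ' := fun θ θ' hle =>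
      (div_le_div_iff₀ (hπ0 θ) (hπ0 θ')).2 (h θ θ' hle)
    set m : Fin (k + 1) → Θ → ℝ := fun i θ => min (r θ) (r (e (ι i))) with hm
    have hm0 : ∀ i θ, 0 < m i θ := fun i θ => lt_min (hr0 θ) (hr0 _)
    set Z : Fin (k + 1) → ℝ := fun i => ∑ θ, π θ * m i θ with hZ
    have hZ0 : ∀ i, 0 < Z i := by
      intro i
      apply Finset.sum_pos
      · exact fun θ _ => mul_pos (hπ0 θ) (hm0 i θ)
      · exact Finset.univ_nonempty
    set seq : Fin (k + 1) → Θ → ℝ := fun i θ => π θ * m i θ / Z i with hseq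
    set Γ : Fin k → Finset Θ :=
      fun i => Finset.univ.filter (fun θ => e (ι i.succ) ≤ θ) with hΓ
    set a : Fin k → ℝ := fun i => 1 - Z i.castSucc / Z i.succ with ha
    have hmemΓ : ∀ (i : Fin k) (θ : Θ), θ ∈ Γ i ↔ e (ι i.succ) ≤ θ := by
      intro i θ; simp [hΓ]
    have hcs : ∀ i : Fin k, ι i.castSucc ≤ ι i.succ := by
      intro i
      rw [Fin.le_def]
      simp only [hι, Fin.coe_cast, Fin.val_succ, Fin.coe_castSucc]
      omega
    -- pointwise values of m on and off Γ i
    have hon : ∀ (i : Fin k) (θ : Θ), θ ∈ Γ i →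
        m i.castSucc θ = r (e (ι i.castSucc)) ∧ m i.succ θ = r (e (ι i.succ)) := by
      intro i θ hθ
      rw [hmemΓ] at hθ
      have h1 : e (ι i.succ) ≤ θ := hθ
      have h2 : e (ι i.castSucc) ≤ θ := le_trans (e.monotone (hcs i)) h1
      exact ⟨min_eq_right (hrmono _ _ h2), min_eq_right (hrmono _ _ h1)⟩
    have hoff : ∀ (i : Fin k) (θ : Θ), θ ∉ Γ i →
        m i.castSucc θ = r θ ∧ m i.succ θ = r θ := by
      intro i θ hθ
      rw [hmemΓ, not_le] at hθ
      have hv : e.symm θ < e.symm (e (ι i.succ)) := e.symm.strictMono hθ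
      rw [e.symm_apply_apply] at hv
      have h2 : θ ≤ e (ι i.castSucc) := by
        have hv2 : e.symm θ ≤ ι i.castSucc := by
          rw [Fin.le_def]
          rw [Fin.lt_def] at hv
          simp only [hι, Fin.coe_cast, Fin.val_succ, Fin.coe_castSucc] at hv ⊢
          omega
        calc θ = e (e.symm θ) := (e.apply_symm_apply θ).symm
          _ ≤ e (ι i.castSucc) := e.monotone hv2
      have h3 : r θ ≤ r (e (ι i.castSucc)) := hrmono _ _ h2
      have h4 : r θ ≤ r (e (ι i.succ)) :=
        le_trans h3 (hrmono _ _ (e.monotone (hcs i)))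
      exact ⟨min_eq_left h3, min_eq_left h4⟩
    refine ⟨k, Γ, a, seq, ?_, ?_, ?_, ?_, ?_⟩
    · -- upper sets
      intro i θ hθ θ' hle
      rw [hmemΓ] at hθ ⊢
      exact le_trans hθ hle
    · -- a bounds
      intro i
      have hZle : Z i.castSucc ≤ Z i.succ := by
        apply Finset.sum_le_sum
        intro θ _
        refine mul_le_mul_of_nonneg_left ?_ (hπ0 θ).le
        exact min_le_min le_rfl (hrmono _ _ (e.monotone (hcs i)))
      constructor
      · simp only [ha, sub_nonneg]
        exact div_le_one_of_le₀ hZle (hZ0 i.succ).le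
      · simp only [ha, sub_le_self_iff]
        exact div_nonneg (hZ0 _).le (hZ0 _).le
    · -- seq 0 = π
      funext θ
      have hbot : e (ι 0) ≤ θ := by
        calc e (ι 0) ≤ e (e.symm θ) := e.monotone (by
              rw [Fin.le_def]; simp [hι])
          _ = θ := e.apply_symm_apply θ
      have hm0' : ∀ θ' : Θ, m 0 θ' = r (e (ι 0)) := by
        intro θ'
        apply min_eq_right
        apply hrmono
        calc e (ι 0) ≤ e (e.symm θ') := e.monotone (by
              rw [Fin.le_def]; simp [hι])
          _ = θ' := e.apply_symm_apply θ'
      have hZ0' : Z 0 = r (e (ι 0)) := by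
        rw [hZ]
        simp only [hm0']
        rw [← Finset.sum_mul, hπ1, one_mul]
      show π θ * m 0 θ / Z 0 = π θ
      rw [hm0' θ, hZ0', mul_div_assoc, div_self (hr0 _).ne', mul_one]
    · -- seq last = πt
      funext θ
      have hmtop : ∀ θ' : Θ, m (Fin.last k) θ' = r θ' := by
        intro θ'
        apply min_eq_left
        apply hrmono
        calc θ' = e (e.symm θ') := (e.apply_symm_apply θ').symm
          _ ≤ e (ι (Fin.last k)) := e.monotone (by
              rw [Fin.le_def]
              simp only [hι, Fin.coe_cast, Fin.val_last]
              have := (e.symm θ').isLt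
              omega)
      have hπr : ∀ θ' : Θ, π θ' * r θ' = πt θ' := by
        intro θ'
        rw [hrdef]
        rw [mul_comm, div_mul_cancel₀ _ (hπ0 θ').ne']
      have hZtop : Z (Fin.last k) = 1 := by
        rw [hZ]
        simp only [hmtop]
        rw [Finset.sum_congr rfl (fun θ' _ => hπr θ'), hπt1]
      show π θ * m (Fin.last k) θ / Z (Fin.last k) = πt θ
      rw [hmtop θ, hZtop, div_one, hπr θ]
    · -- recursion
      intro i
      set c : ℝ := r (e (ι i.castSucc)) with hc
      set C : ℝ := r (e (ι i.succ)) with hC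
      have hc0 : 0 < c := hr0 _
      have hC0 : 0 < C := hr0 _
      set P : ℝ := ∑ θ ∈ Γ i, π θ with hP
      have hP0 : 0 < P := by
        apply Finset.sum_pos (fun θ _ => hπ0 θ)
        exact ⟨e (ι i.succ), by rw [hmemΓ]⟩
      -- S computation
      have hSval : (∑ θ ∈ Γ i, seq i.castSucc θ) = P * c / Z i.castSucc := by
        rw [hP, Finset.sum_mul, Finset.sum_div]
        apply Finset.sum_congr rfl
        intro θ hθ
        show π θ * m i.castSucc θ / Z i.castSucc = π θ * c / Z i.castSucc
        rw [(hon i θ hθ).1, hc]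
      have hS0 : 0 < (∑ θ ∈ Γ i, seq i.castSucc θ) := by
        rw [hSval]
        exact div_pos (mul_pos hP0 hc0) (hZ0 _)
      refine ⟨hS0, ?_⟩
      -- Z relation
      have hZrel : Z i.succ = Z i.castSucc + P * (C - c) := by
        have hdiff : ∑ θ ∈ Γ i, (π θ * m i.succ θ - π θ * m i.castSucc θ)
            = ∑ θ : Θ, (π θ * m i.succ θ - π θ * m i.castSucc θ) := by
          apply Finset.sum_subset (Finset.subset_univ _)
          intro θ _ hθ
          rw [(hoff i θ hθ).1, (hoff i θ hθ).2]
          ring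
        have hval : ∑ θ ∈ Γ i, (π θ * m i.succ θ - π θ * m i.castSucc θ)
            = P * (C - c) := by
          rw [hP, Finset.sum_mul]
          apply Finset.sum_congr rfl
          intro θ hθ
          rw [(hon i θ hθ).1, (hon i θ hθ).2, ← hc, ← hC]
          ring
        have : Z i.succ - Z i.castSucc = P * (C - c) := by
          rw [hZ, ← Finset.sum_sub_distrib, ← hdiff, hval]
        linarith
      intro θ
      have hZc0 : Z i.castSucc ≠ 0 := (hZ0 _).ne'
      have hZs0 : Z i.succ ≠ 0 := (hZ0 _).ne'
      have hd : Z i.castSucc + P * (C - c) ≠ 0 := by rw [← hZrel]; exact hZs0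
      by_cases hθ : θ ∈ Γ i
      · -- on Γ
        obtain ⟨hmc, hmC⟩ := hon i θ hθ
        rw [if_pos hθ, hSval]
        show π θ * m i.succ θ / Z i.succ
            = a i * (π θ * m i.castSucc θ / Z i.castSucc / (P * c / Z i.castSucc))
              + (1 - a i) * (π θ * m i.castSucc θ / Z i.castSucc)
        rw [hmc, hmC, ← hc, ← hC, ha]
        simp only
        rw [hZrel]
        field_simp
        ring
      · -- off Γ
        obtain ⟨hmc, hmC⟩ := hoff i θ hθ
        rw [if_neg hθ]
        show π θ * m i.succ θ / Z i.succ
            = a i * 0 + (1 - a i) * (π θ * m i.castSucc θ / Z i.castSucc)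
        rw [hmc, hmC, ha]
        simp only
        rw [hZrel]
        field_simp
        ring
  · -- converse direction
    rintro ⟨k, Γ, a, seq, hΓ, ha, h0, hlast, hrec⟩
    have key : ∀ i : Fin (k + 1),
        (∀ θ, 0 ≤ seq i θ) ∧
        (∀ θ θ' : Θ, θ ≤ θ' → seq i θ * π θ' ≤ seq i θ' * π θ) := by
      intro i
      induction i using Fin.induction with
      | zero =>
        rw [h0]
        exact ⟨fun θ => (hπ0 θ).le, fun θ θ' _ => le_of_eq (by ring)⟩
      | succ i ih =>
        obtain ⟨hnn, hlr⟩ := ih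
        obtain ⟨hS, heq⟩ := hrec i
        set S : ℝ := ∑ θ' ∈ Γ i, seq i.castSucc θ' with hSdef
        set g : Θ → ℝ := fun θ => a i * (if θ ∈ Γ i then S⁻¹ else 0) + (1 - a i) with hg
        have hfact : ∀ θ, seq i.succ θ = g θ * seq i.castSucc θ := by
          intro θ
          rw [heq θ]
          by_cases hθ : θ ∈ Γ i
          · simp only [hg, if_pos hθ]
            rw [div_eq_inv_mul]
            ring
          · simp only [hg, if_neg hθ]
            ring
        have hg0 : ∀ θ, 0 ≤ g θ := by
          intro θ
          rw [hg]
          have h1 : 0 ≤ a i * (if θ ∈ Γ i then S⁻¹ else 0) := by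
            apply mul_nonneg (ha i).1
            split
            · exact inv_nonneg.2 hS.le
            · exact le_rfl
          have h2 : 0 ≤ 1 - a i := by linarith [(ha i).2]
          linarith
        have hgmono : ∀ θ θ' : Θ, θ ≤ θ' → g θ ≤ g θ' := by
          intro θ θ' hle
          rw [hg]
          simp only
          by_cases hθ : θ ∈ Γ i
          · rw [if_pos hθ, if_pos (hΓ i θ hθ θ' hle)]
          · rw [if_neg hθ]
            have : a i * 0 ≤ a i * (if θ' ∈ Γ i then S⁻¹ else 0) := by
              apply mul_le_mul_of_nonneg_left _ (ha i).1
              split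
              · exact inv_nonneg.2 hS.le
              · exact le_rfl
            linarith
        constructor
        · intro θ
          rw [hfact θ]
          exact mul_nonneg (hg0 θ) (hnn θ)
        · intro θ θ' hle
          rw [hfact θ, hfact θ']
          calc g θ * seq i.castSucc θ * π θ'
              = g θ * (seq i.castSucc θ * π θ') := by ring
            _ ≤ g θ' * (seq i.castSucc θ * π θ') := by
                apply mul_le_mul_of_nonneg_right (hgmono θ θ' hle)
                exact mul_nonneg (hnn θ) (hπ0 θ').le
            _ ≤ g θ' * (seq i.castSucc θ' * π θ) := by
                apply mul_le_mul_of_nonneg_left (hlr θ θ' hle) (hg0 θ')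
            _ = g θ' * seq i.castSucc θ' * π θ := by ring
    intro θ θ' hle
    have := (key (Fin.last k)).2 θ θ' hle
    rwa [hlast] at this
end
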